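/- Let N ≥ 2 be an integer and let c, d, k be positive integers with gcd(c, d) = 1 and N dividing c. Then Σ_{v | N} (μ(v)/v)(s(d, vc/N) - s(d, vc/N + vkd)) = (N² k (d² + 1))/(12 c (c + kNd)) · Π_{p | N} (1 - p⁻²), where the sum runs over positive divisors v of N, μ is the Möbius function, s is the classical Dedekind sum, and the product runs over primes p dividing N. -/

import Mathlib

open Classical in
/-- The sawtooth function `((x))`. -/
noncomputable def sawtooth (x : ℝ) : ℝ :=
  if ∃ n : ℤ, x = (n : ℝ) then 0 else x - ⌊x⌋ - 1/2

/-- The Dedekind sum `s(d, c)` (defined by the sawtooth sum for any modulus `c`). -/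
noncomputable def dedekindSum (d c : ℕ) : ℝ :=
  ∑ m ∈ Finset.range c, sawtooth ((d : ℝ) * m / c) * sawtooth ((m : ℝ) / c)

lemma sawtooth_int (n : ℤ) : sawtooth (n : ℝ) = 0 := by
  rw [sawtooth, if_pos ⟨n, rfl⟩]

lemma sawtooth_add_int (x : ℝ) (n : ℤ) : sawtooth (x + n) = sawtooth x := by
  unfold sawtooth
  by_cases h : ∃ m : ℤ, x = (m : ℝ)
  · obtain ⟨m, rfl⟩ := h
    rw [if_pos ⟨m + n, by push_cast; ring⟩, if_pos ⟨m, rfl⟩]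
  · rw [if_neg h, if_neg (by
      rintro ⟨m, hm⟩
      exact h ⟨m - n, by push_cast; linarith⟩)]
    rw [Int.floor_add_intCast]
    push_cast
    ring

lemma sawtooth_frac {r c : ℕ} (h1 : 0 < r) (h2 : r < c) :
    sawtooth ((r : ℝ) / c) = (r : ℝ) / c - 1/2 := by
  have hc : (0:ℝ) < c := by exact_mod_cast h1.trans h2
  have hr : (0:ℝ) < r := by exact_mod_cast h1
  have hx1 : (0:ℝ) < (r:ℝ)/c := div_pos hr hc
  have hx2 : (r:ℝ)/c < 1 := by
    rw [div_lt_one hc]; exact_mod_cast h2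
  rw [sawtooth, if_neg, Int.floor_eq_zero_iff.2 ⟨le_of_lt hx1, hx2⟩]
  · norm_num
  · rintro ⟨n, hn⟩
    rw [hn] at hx1 hx2
    have : 0 < n := by exact_mod_cast hx1
    have : n < 1 := by exact_mod_cast hx2
    omega

lemma sawtooth_nat_div (a c : ℕ) (hc : 0 < c) (h : ¬ c ∣ a) :
    sawtooth ((a : ℝ) / c) = ((a % c : ℕ) : ℝ) / c - 1/2 := by
  have hc' : (c:ℝ) ≠ 0 := by positivity
  have h2 : ((a % c : ℕ) : ℝ) + (c:ℝ) * ((a/c : ℕ):ℝ) = a := by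
    exact_mod_cast Nat.mod_add_div a c
  have key : (a : ℝ) / c = ((a % c : ℕ) : ℝ) / c + (((a / c : ℕ) : ℤ) : ℝ) := by
    rw [Int.cast_natCast]
    field_simp
    linarith
  rw [key, sawtooth_add_int, sawtooth_frac (Nat.pos_of_ne_zero ?_) (Nat.mod_lt a hc)]
  intro h0
  exact h (Nat.dvd_of_mod_eq_zero h0)

lemma sum_mod_perm (f : ℕ → ℝ) {d c : ℕ} (h : Nat.Coprime d c) (hc : 0 < c) :
    ∑ m ∈ Finset.range c, f (d * m % c) = ∑ m ∈ Finset.range c, f m := by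
  rcases eq_or_lt_of_le (show 1 ≤ c from hc) with h1 | h1
  · simp [← h1]
  obtain ⟨e, -, he⟩ := Nat.exists_mul_mod_eq_one_of_coprime h h1
  have hde : d * e ≡ 1 [MOD c] := by
    unfold Nat.ModEq; rw [he, Nat.mod_eq_of_lt h1]
  have key1 : ∀ a, a < c → e * (d * a % c) % c = a := by
    intro a ha
    have : e * (d * a % c) ≡ a [MOD c] := by
      calc e * (d * a % c) ≡ e * (d * a) [MOD c] := (Nat.mod_modEq _ _).mul_left e
        _ = d * e * a := by ring
        _ ≡ 1 * a [MOD c] := hde.mul_right a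
        _ = a := one_mul a
    rw [Nat.ModEq] at this
    rw [this, Nat.mod_eq_of_lt ha]
  have key2 : ∀ a, a < c → d * (e * a % c) % c = a := by
    intro a ha
    have : d * (e * a % c) ≡ a [MOD c] := by
      calc d * (e * a % c) ≡ d * (e * a) [MOD c] := (Nat.mod_modEq _ _).mul_left d
        _ = d * e * a := by ring
        _ ≡ 1 * a [MOD c] := hde.mul_right a
        _ = a := one_mul a
    rw [Nat.ModEq] at this
    rw [this, Nat.mod_eq_of_lt ha]
  refine Finset.sum_nbij' (fun m => d * m % c) (fun m => e * m % c) ?_ ?_ ?_ ?_ ?_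
  · intro a _; exact Finset.mem_range.2 (Nat.mod_lt _ hc)
  · intro a _; exact Finset.mem_range.2 (Nat.mod_lt _ hc)
  · intro a ha; exact key1 a (Finset.mem_range.1 ha)
  · intro a ha; exact key2 a (Finset.mem_range.1 ha)
  · intro a _; rfl

lemma sum_range_cast (c : ℕ) : ∑ m ∈ Finset.range c, (m:ℝ) = c*(c-1)/2 := by
  induction c with
  | zero => simp
  | succ n ih => rw [Finset.sum_range_succ, ih]; push_cast; ring

lemma sum_range_sq_cast (c : ℕ) :
    ∑ m ∈ Finset.range c, (m:ℝ)^2 = c*(c-1)*(2*c-1)/6 := by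
  induction c with
  | zero => simp
  | succ n ih => rw [Finset.sum_range_succ, ih]; push_cast; ring

lemma sum_Ico_one_eq_range (f : ℕ → ℝ) {c : ℕ} (hc : 0 < c) (h0 : f 0 = 0) :
    ∑ m ∈ Finset.Ico 1 c, f m = ∑ m ∈ Finset.range c, f m := by
  rw [Finset.range_eq_Ico, Finset.sum_eq_sum_Ico_succ_bot hc, h0, zero_add]

lemma not_dvd_mul {c d m : ℕ} (h : Nat.Coprime d c) (hm1 : 0 < m) (hm2 : m < c) :
    ¬ c ∣ d * m := by
  intro hdvd
  have : c ∣ m := (Nat.Coprime.dvd_of_dvd_mul_left (h.symm) hdvd)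
  exact absurd (Nat.le_of_dvd hm1 this) (not_le.2 hm2)

lemma dedekindSum_eq_T {d c : ℕ} (hc : 0 < c) (h : Nat.Coprime d c) :
    dedekindSum d c =
      (∑ m ∈ Finset.range c, (m:ℝ) * ((d * m % c : ℕ):ℝ)) / (c:ℝ)^2 - ((c:ℝ) - 1)/4 := by
  have hcR : (0:ℝ) < c := by exact_mod_cast hc
  rw [dedekindSum, ← sum_Ico_one_eq_range _ hc (by
    have h0 : sawtooth 0 = 0 := by simpa using sawtooth_int 0
    norm_num [h0])]
  have step : ∀ m ∈ Finset.Ico 1 c,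
      sawtooth ((d : ℝ) * m / c) * sawtooth ((m : ℝ) / c) =
      ((m:ℝ) * ((d * m % c : ℕ):ℝ)) / (c:ℝ)^2 - ((d * m % c : ℕ):ℝ)/(2*c)
        - (m:ℝ)/(2*c) + 1/4 := by
    intro m hm
    obtain ⟨hm1, hm2⟩ := Finset.mem_Ico.1 hm
    have h1 : sawtooth ((d : ℝ) * m / c) = ((d * m % c : ℕ):ℝ)/c - 1/2 := by
      rw [show (d:ℝ) * m = ((d*m : ℕ):ℝ) by push_cast; ring]
      exact sawtooth_nat_div _ _ hc (not_dvd_mul h hm1 hm2)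
    have h2 : sawtooth ((m : ℝ) / c) = (m:ℝ)/c - 1/2 := sawtooth_frac hm1 hm2
    rw [h1, h2]
    field_simp
    ring
  rw [Finset.sum_congr rfl step]
  rw [Finset.sum_add_distrib, Finset.sum_sub_distrib, Finset.sum_sub_distrib,
    ← Finset.sum_div, ← Finset.sum_div, ← Finset.sum_div, Finset.sum_const, Nat.card_Ico]
  have E1 : ∑ m ∈ Finset.Ico 1 c, (m:ℝ) * ((d * m % c : ℕ):ℝ)
      = ∑ m ∈ Finset.range c, (m:ℝ) * ((d * m % c : ℕ):ℝ) :=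
    sum_Ico_one_eq_range _ hc (by simp)
  have E2 : ∑ m ∈ Finset.Ico 1 c, ((d * m % c : ℕ):ℝ) = (c:ℝ)*((c:ℝ)-1)/2 := by
    rw [sum_Ico_one_eq_range _ hc (by simp)]
    rw [sum_mod_perm (fun n => (n:ℝ)) h hc, sum_range_cast]
  have E3 : ∑ m ∈ Finset.Ico 1 c, (m:ℝ) = (c:ℝ)*((c:ℝ)-1)/2 := by
    rw [sum_Ico_one_eq_range _ hc (by simp), sum_range_cast]
  rw [E1, E2, E3]
  have : ((c - 1 : ℕ) : ℝ) = (c:ℝ) - 1 := by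
    have : 1 ≤ c := hc
    push_cast [this]
    ring
  rw [nsmul_eq_mul, this]
  field_simp
  ring

lemma swap_A {d c : ℕ} (hc : 0 < c) (hd : 0 < d) (h : Nat.Coprime d c) :
    ∑ m ∈ Finset.range c, (m:ℝ) * ((d * m / c : ℕ):ℝ)
      = ∑ n ∈ Finset.Ico 1 d,
          ((c:ℝ)*((c:ℝ)-1)/2 - ((c*n/d : ℕ):ℝ)*(((c*n/d : ℕ):ℝ)+1)/2) := by
  have step1 : ∀ m ∈ Finset.range c, (m:ℝ) * ((d * m / c : ℕ):ℝ)
      = ∑ n ∈ Finset.Ico 1 d, (if c * n ≤ d * m then (m:ℝ) else 0) := by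
    intro m hm
    have hmc : m < c := Finset.mem_range.1 hm
    have hq : d * m / c < d := by
      rw [Nat.div_lt_iff_lt_mul hc]
      exact Nat.mul_lt_mul_of_le_of_lt (le_refl d) hmc hd
    have hfilter : (Finset.Ico 1 d).filter (fun n => c * n ≤ d * m)
        = Finset.Ico 1 (d * m / c + 1) := by
      ext n
      simp only [Finset.mem_filter, Finset.mem_Ico]
      constructor
      · rintro ⟨⟨h1, _⟩, h2⟩
        refine ⟨h1, ?_⟩
        have : n ≤ d * m / c := (Nat.le_div_iff_mul_le hc).2 (by linarith [h2, Nat.mul_comm c n])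
        omega
      · rintro ⟨h1, h2⟩
        have hn : n ≤ d * m / c := by omega
        refine ⟨⟨h1, by omega⟩, ?_⟩
        calc c * n ≤ c * (d * m / c) := Nat.mul_le_mul_left c hn
          _ ≤ d * m := Nat.mul_div_le _ _
    rw [← Finset.sum_filter, hfilter, Finset.sum_const, Nat.card_Ico, nsmul_eq_mul]
    push_cast
    ring
  rw [Finset.sum_congr rfl step1, Finset.sum_comm]
  apply Finset.sum_congr rfl
  intro n hn
  obtain ⟨hn1, hn2⟩ := Finset.mem_Ico.1 hn
  set b := c * n / d with hb
  have hndvd : ¬ d ∣ c * n := by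
    intro hdvd
    have : d ∣ n := (Nat.Coprime.dvd_of_dvd_mul_left (h) hdvd)
    exact absurd (Nat.le_of_dvd (by omega) this) (not_le.2 hn2)
  have hbc : b + 1 ≤ c := by
    have : c * n / d < c := by
      rw [Nat.div_lt_iff_lt_mul hd]
      exact Nat.mul_lt_mul_of_le_of_lt (le_refl c) hn2 hc
    omega
  have hfilter2 : (Finset.range c).filter (fun m => c * n ≤ d * m) = Finset.Ico (b + 1) c := by
    ext m
    simp only [Finset.mem_filter, Finset.mem_range, Finset.mem_Ico]
    constructor
    · rintro ⟨h1, h2⟩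
      have hne : c * n ≠ d * m := fun heq => hndvd ⟨m, heq⟩
      have : c * n < d * m := lt_of_le_of_ne h2 hne
      have : b < m := by
        rw [hb, Nat.div_lt_iff_lt_mul hd]
        linarith [Nat.mul_comm m d]
      omega
    · rintro ⟨h1, h2⟩
      have : c * n < m * d := (Nat.div_lt_iff_lt_mul hd).1 (by omega)
      exact ⟨h2, by linarith [Nat.mul_comm m d]⟩
  rw [← Finset.sum_filter, hfilter2]
  rw [Finset.sum_Ico_eq_sub (fun m => (m:ℝ)) hbc, sum_range_cast, sum_range_cast]
  push_cast
  ring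

lemma dedekind_reciprocity {d c : ℕ} (hc : 0 < c) (hd : 0 < d) (h : Nat.Coprime d c) :
    dedekindSum d c + dedekindSum c d
      = -(1/4) + ((c:ℝ)^2 + (d:ℝ)^2 + 1)/(12*(c:ℝ)*(d:ℝ)) := by
  have hcR : (0:ℝ) < c := by exact_mod_cast hc
  have hdR : (0:ℝ) < d := by exact_mod_cast hd
  set Tc := ∑ m ∈ Finset.range c, (m:ℝ) * ((d * m % c : ℕ):ℝ) with hTc
  set Td := ∑ n ∈ Finset.range d, (n:ℝ) * ((c * n % d : ℕ):ℝ) with hTd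
  set A := ∑ m ∈ Finset.range c, (m:ℝ) * ((d * m / c : ℕ):ℝ) with hA
  set B := ∑ n ∈ Finset.Ico 1 d, ((c * n / d : ℕ):ℝ) with hB
  set B2 := ∑ n ∈ Finset.Ico 1 d, ((c * n / d : ℕ):ℝ)^2 with hB2
  -- F3 : Tc = d * S2c - c * A
  have F3 : Tc = (d:ℝ) * ((c:ℝ)*((c:ℝ)-1)*(2*(c:ℝ)-1)/6) - (c:ℝ) * A := by
    have step : ∀ m ∈ Finset.range c, (m:ℝ) * ((d * m % c : ℕ):ℝ)
        = (d:ℝ)*(m:ℝ)^2 - (c:ℝ)*((m:ℝ) * ((d * m / c : ℕ):ℝ)) := by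
      intro m _
      have hmd : ((d*m % c : ℕ):ℝ) + (c:ℝ)*((d*m/c : ℕ):ℝ) = (d:ℝ)*(m:ℝ) := by
        exact_mod_cast Nat.mod_add_div (d*m) c
      linear_combination (m:ℝ) * hmd
    rw [hTc, Finset.sum_congr rfl step, Finset.sum_sub_distrib,
      ← Finset.mul_sum, ← Finset.mul_sum, sum_range_sq_cast]
  -- F4 : A = (d-1)*c*(c-1)/2 - (B2+B)/2
  have F4 : A = ((d:ℝ)-1)*(c:ℝ)*((c:ℝ)-1)/2 - (B2 + B)/2 := by
    rw [hA, swap_A hc hd h]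
    have step : ∀ n ∈ Finset.Ico 1 d,
        ((c:ℝ)*((c:ℝ)-1)/2 - ((c*n/d : ℕ):ℝ)*(((c*n/d : ℕ):ℝ)+1)/2)
        = (c:ℝ)*((c:ℝ)-1)/2 - (((c*n/d : ℕ):ℝ)^2/2 + ((c*n/d : ℕ):ℝ)/2) := by
      intro n _; ring
    rw [Finset.sum_congr rfl step, Finset.sum_sub_distrib, Finset.sum_add_distrib,
      Finset.sum_const, Nat.card_Ico, nsmul_eq_mul, hB2, hB, ← Finset.sum_div, ← Finset.sum_div]
    have : ((d - 1 : ℕ) : ℝ) = (d:ℝ) - 1 := by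
      have : 1 ≤ d := hd
      push_cast [this]; ring
    rw [this]
    ring
  -- F5 : d * B = (c-1)*d*(d-1)/2
  have F5 : (d:ℝ) * B = ((c:ℝ)-1)*(d:ℝ)*((d:ℝ)-1)/2 := by
    have step : ∀ n ∈ Finset.Ico 1 d,
        (d:ℝ) * ((c*n/d : ℕ):ℝ) = (c:ℝ)*(n:ℝ) - ((c*n % d : ℕ):ℝ) := by
      intro n _
      have hmd : ((c*n % d : ℕ):ℝ) + (d:ℝ)*((c*n/d : ℕ):ℝ) = (c:ℝ)*(n:ℝ) := by
        exact_mod_cast Nat.mod_add_div (c*n) d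
      linarith
    rw [hB, Finset.mul_sum, Finset.sum_congr rfl step, Finset.sum_sub_distrib, ← Finset.mul_sum]
    have e1 : ∑ n ∈ Finset.Ico 1 d, (n:ℝ) = (d:ℝ)*((d:ℝ)-1)/2 := by
      rw [sum_Ico_one_eq_range _ hd (by simp), sum_range_cast]
    have e2 : ∑ n ∈ Finset.Ico 1 d, ((c*n % d : ℕ):ℝ) = (d:ℝ)*((d:ℝ)-1)/2 := by
      rw [sum_Ico_one_eq_range _ hd (by simp),
        sum_mod_perm (fun a => (a:ℝ)) h.symm hd, sum_range_cast]
    rw [e1, e2]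
    ring
  -- F6 : d^2 * B2 = (c^2+1)*S2d - 2*c*Td
  have F6 : (d:ℝ)^2 * B2
      = ((c:ℝ)^2+1)*((d:ℝ)*((d:ℝ)-1)*(2*(d:ℝ)-1)/6) - 2*(c:ℝ)*Td := by
    have step : ∀ n ∈ Finset.Ico 1 d,
        (d:ℝ)^2 * ((c*n/d : ℕ):ℝ)^2
        = (c:ℝ)^2*(n:ℝ)^2 - 2*(c:ℝ)*((n:ℝ)*((c*n % d : ℕ):ℝ)) + ((c*n % d : ℕ):ℝ)^2 := by
      intro n _
      have hmd : ((c*n % d : ℕ):ℝ) + (d:ℝ)*((c*n/d : ℕ):ℝ) = (c:ℝ)*(n:ℝ) := by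
        exact_mod_cast Nat.mod_add_div (c*n) d
      linear_combination ((d:ℝ)*((c*n/d : ℕ):ℝ) + (c:ℝ)*(n:ℝ) - ((c*n % d : ℕ):ℝ)) * hmd
    rw [hB2, Finset.mul_sum, Finset.sum_congr rfl step, Finset.sum_add_distrib,
      Finset.sum_sub_distrib, ← Finset.mul_sum, ← Finset.mul_sum]
    have e1 : ∑ n ∈ Finset.Ico 1 d, (n:ℝ)^2 = (d:ℝ)*((d:ℝ)-1)*(2*(d:ℝ)-1)/6 := by
      rw [sum_Ico_one_eq_range _ hd (by simp), sum_range_sq_cast]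
    have e2 : ∑ n ∈ Finset.Ico 1 d, ((c*n % d : ℕ):ℝ)^2 = (d:ℝ)*((d:ℝ)-1)*(2*(d:ℝ)-1)/6 := by
      rw [sum_Ico_one_eq_range _ hd (by simp),
        sum_mod_perm (fun a => (a:ℝ)^2) h.symm hd, sum_range_sq_cast]
    have e3 : ∑ n ∈ Finset.Ico 1 d, (n:ℝ)*((c*n % d : ℕ):ℝ) = Td := by
      rw [hTd, sum_Ico_one_eq_range _ hd (by simp)]
    rw [e1, e2, e3]
    ring
  rw [dedekindSum_eq_T hc h, dedekindSum_eq_T hd h.symm, ← hTc, ← hTd]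
  have hB' : B = ((c:ℝ)-1)*((d:ℝ)-1)/2 := by
    field_simp at F5
    nlinarith [F5]
  have hB2' : B2 = (((c:ℝ)^2+1)*((d:ℝ)*((d:ℝ)-1)*(2*(d:ℝ)-1)/6) - 2*(c:ℝ)*Td)/(d:ℝ)^2 := by
    rw [← F6]
    field_simp
  rw [F3, F4, hB2', hB']
  field_simp
  ring

lemma dedekindSum_add_mul (a t c : ℕ) (hc : 0 < c) :
    dedekindSum (a + t * c) c = dedekindSum a c := by
  unfold dedekindSum
  apply Finset.sum_congr rfl
  intro m _
  congr 1
  have hcR : (c:ℝ) ≠ 0 := by positivity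
  have : ((a + t * c : ℕ) : ℝ) * m / c = (a:ℝ) * m / c + ((t * m : ℕ) : ℤ) := by
    push_cast
    field_simp
  rw [this, sawtooth_add_int]

lemma dedekind_diff {d c' : ℕ} (j : ℕ) (hc' : 0 < c') (hd : 0 < d) (h : Nat.Coprime d c') :
    dedekindSum d c' - dedekindSum d (c' + j * d)
      = (j:ℝ)/12 * (((d:ℝ)^2+1)/((c':ℝ)*((c':ℝ)+(j:ℝ)*(d:ℝ))) - 1) := by
  have he : Nat.Coprime d (c' + j * d) := (Nat.coprime_add_mul_right_right d c' j).2 h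
  have hepos : 0 < c' + j * d := by omega
  have r1 := dedekind_reciprocity hc' hd h
  have r2 := dedekind_reciprocity hepos hd he
  have hper : dedekindSum (c' + j * d) d = dedekindSum c' d := dedekindSum_add_mul c' j d hd
  have hcR : (0:ℝ) < c' := by exact_mod_cast hc'
  have hdR : (0:ℝ) < d := by exact_mod_cast hd
  have heR : ((c' + j * d : ℕ):ℝ) = (c':ℝ) + (j:ℝ)*(d:ℝ) := by push_cast; ring
  rw [heR, hper] at r2
  have heR' : (0:ℝ) < (c':ℝ) + (j:ℝ)*(d:ℝ) := by positivity
  have key : dedekindSum d c' - dedekindSum d (c' + j * d)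
      = ((c':ℝ)^2 + (d:ℝ)^2 + 1)/(12*(c':ℝ)*(d:ℝ))
        - (((c':ℝ) + (j:ℝ)*(d:ℝ))^2 + (d:ℝ)^2 + 1)/(12*((c':ℝ) + (j:ℝ)*(d:ℝ))*(d:ℝ)) := by
    linarith
  rw [key]
  field_simp
  ring

lemma squarefree_prod_primes {s : Finset ℕ} (hs : ∀ p ∈ s, p.Prime) :
    Squarefree (∏ p ∈ s, p) := by
  induction s using Finset.cons_induction with
  | empty => simp
  | cons p s hp ih =>
    rw [Finset.prod_cons]
    have hpp := hs p (Finset.mem_cons_self _ _)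
    have hcop : Nat.Coprime p (∏ q ∈ s, q) := Nat.Coprime.prod_right fun q hq =>
      (Nat.coprime_primes hpp (hs q (Finset.mem_cons_of_mem hq))).2
        (by rintro rfl; exact hp hq)
    exact (Nat.squarefree_mul hcop).2
      ⟨hpp.prime.squarefree, ih fun q hq => hs q (Finset.mem_cons_of_mem hq)⟩

lemma sum_moebius_zero {N : ℕ} (hN : 2 ≤ N) :
    ∑ v ∈ N.divisors, ((ArithmeticFunction.moebius v : ℤ) : ℝ) = 0 := by
  have h1 := congrArg (fun f : ArithmeticFunction ℤ => f N)
    ArithmeticFunction.moebius_mul_coe_zeta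
  simp only [ArithmeticFunction.coe_mul_zeta_apply, ArithmeticFunction.one_apply] at h1
  rw [if_neg (by omega)] at h1
  exact_mod_cast congrArg (fun z : ℤ => (z : ℝ)) h1

lemma sum_moebius_inv_sq {N : ℕ} (hN : 0 < N) :
    ∑ v ∈ N.divisors, ((ArithmeticFunction.moebius v : ℤ) : ℝ) * ((v:ℝ)^2)⁻¹
      = ∏ p ∈ N.primeFactors, (1 - ((p:ℝ)^2)⁻¹) := by
  set r := ∏ p ∈ N.primeFactors, p with hr
  have hprimes : ∀ p ∈ N.primeFactors, p.Prime := fun p hp => Nat.prime_of_mem_primeFactors hp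
  have hrsf : Squarefree r := squarefree_prod_primes hprimes
  have hrfac : r.primeFactors = N.primeFactors := Nat.primeFactors_prod hprimes
  -- the arithmetic function v ↦ (v^2)⁻¹
  set f : ArithmeticFunction ℝ := ⟨fun v => ((v:ℝ)^2)⁻¹, by simp⟩ with hf
  have hfmul : f.IsMultiplicative := by
    constructor
    · simp [hf]
    · intro m n _
      show (((m*n : ℕ):ℝ)^2)⁻¹ = ((m:ℝ)^2)⁻¹ * ((n:ℝ)^2)⁻¹
      push_cast
      rw [mul_pow, mul_inv]
  have key := ArithmeticFunction.IsMultiplicative.prodPrimeFactors_one_sub_of_squarefree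
    f hfmul hrsf
  rw [hrfac] at key
  have hdiv : r.divisors = N.divisors.filter Squarefree := by
    ext v
    simp only [Nat.mem_divisors, Finset.mem_filter]
    constructor
    · rintro ⟨hv, hr0⟩
      exact ⟨⟨hv.trans (Nat.prod_primeFactors_dvd N), hN.ne'⟩, hrsf.squarefree_of_dvd hv⟩
    · rintro ⟨⟨hv, _⟩, hsf⟩
      refine ⟨?_, hrsf.ne_zero⟩
      calc v = ∏ p ∈ v.primeFactors, p := (Nat.prod_primeFactors_of_squarefree hsf).symm
        _ ∣ ∏ p ∈ N.primeFactors, p :=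
            Finset.prod_dvd_prod_of_subset _ _ _ (Nat.primeFactors_mono hv hN.ne')
  have hsum : ∑ v ∈ r.divisors, ((ArithmeticFunction.moebius v : ℤ) : ℝ) * f v
      = ∑ v ∈ N.divisors, ((ArithmeticFunction.moebius v : ℤ) : ℝ) * f v := by
    rw [hdiv]
    apply Finset.sum_filter_of_ne
    intro v _ hne
    by_contra hnsf
    rw [ArithmeticFunction.moebius_eq_zero_of_not_squarefree hnsf] at hne
    simp at hne
  show (∑ v ∈ N.divisors, ((ArithmeticFunction.moebius v : ℤ) : ℝ) * f v)
      = ∏ p ∈ N.primeFactors, (1 - f p)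
  rw [← hsum]
  exact key.symm

theorem moebius_dedekind_sum_identity (N c d k : ℕ) (hN : 2 ≤ N) (hc : 0 < c)
    (hd : 0 < d) (hk : 0 < k) (hcd : Nat.Coprime c d) (hNc : N ∣ c) :
    ∑ v ∈ N.divisors, ((ArithmeticFunction.moebius v : ℝ) / v) *
        (dedekindSum d (v * c / N) - dedekindSum d (v * c / N + v * k * d)) =
      ((N : ℝ)^2 * k * ((d : ℝ)^2 + 1)) / (12 * c * (c + k * N * d)) *
        ∏ p ∈ N.primeFactors, (1 - ((p : ℝ)^2)⁻¹) := by
  obtain ⟨c₀, rfl⟩ := hNc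
  have hN0 : 0 < N := by omega
  have hc₀ : 0 < c₀ := by
    rcases Nat.eq_zero_or_pos c₀ with h0 | h0
    · subst h0; simp at hc
    · exact h0
  have hc₀R : (0:ℝ) < c₀ := by exact_mod_cast hc₀
  have hdR : (0:ℝ) < d := by exact_mod_cast hd
  have hkR : (0:ℝ) < k := by exact_mod_cast hk
  have hNR : (0:ℝ) < N := by exact_mod_cast hN0
  set K : ℝ := (k:ℝ)*((d:ℝ)^2+1)/(12*(c₀:ℝ)*((c₀:ℝ)+(k:ℝ)*(d:ℝ))) with hK
  have step : ∀ v ∈ N.divisors,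
      ((ArithmeticFunction.moebius v : ℝ) / v) *
        (dedekindSum d (v * (N * c₀) / N) - dedekindSum d (v * (N * c₀) / N + v * k * d))
      = ((ArithmeticFunction.moebius v : ℤ):ℝ) * (K * ((v:ℝ)^2)⁻¹)
        - ((ArithmeticFunction.moebius v : ℤ):ℝ) * ((k:ℝ)/12) := by
    intro v hv
    have hvd : v ∣ N := (Nat.mem_divisors.1 hv).1
    have hvpos : 0 < v := Nat.pos_of_mem_divisors hv
    have hvR : (0:ℝ) < v := by exact_mod_cast hvpos
    have hquot : v * (N * c₀) / N = v * c₀ := by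
      rw [show v * (N * c₀) = N * (v * c₀) by ring, Nat.mul_div_cancel_left _ hN0]
    have hcop : Nat.Coprime d (v * c₀) := by
      apply Nat.Coprime.coprime_dvd_right _ hcd.symm
      exact mul_dvd_mul_right hvd c₀
    have hvc₀ : 0 < v * c₀ := Nat.mul_pos hvpos hc₀
    have hdiff := dedekind_diff (v * k) hvc₀ hd hcop
    rw [hquot, hdiff, hK]
    push_cast
    have hpos : (0:ℝ) < (v:ℝ)*(c₀:ℝ)*((v:ℝ)*(c₀:ℝ)+(v:ℝ)*(k:ℝ)*(d:ℝ)) := by positivity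
    field_simp
  rw [Finset.sum_congr rfl step, Finset.sum_sub_distrib]
  have e1 : ∑ v ∈ N.divisors, ((ArithmeticFunction.moebius v : ℤ):ℝ) * (K * ((v:ℝ)^2)⁻¹)
      = K * ∑ v ∈ N.divisors, ((ArithmeticFunction.moebius v : ℤ):ℝ) * ((v:ℝ)^2)⁻¹ := by
    rw [Finset.mul_sum]
    apply Finset.sum_congr rfl
    intro v _
    ring
  have e2 : ∑ v ∈ N.divisors, ((ArithmeticFunction.moebius v : ℤ):ℝ) * ((k:ℝ)/12)
      = (∑ v ∈ N.divisors, ((ArithmeticFunction.moebius v : ℤ):ℝ)) * ((k:ℝ)/12) := by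
    rw [Finset.sum_mul]
  rw [e1, e2, sum_moebius_zero hN, sum_moebius_inv_sq hN0, zero_mul, sub_zero]
  congr 1
  rw [hK]
  push_cast
  rw [div_eq_div_iff (by positivity) (by positivity)]
  ring
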